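/- Let f : [A,B] → ℝ be C² with f' > 0 on [A,B], and suppose f'' is α-Hölder with constant H for some α ∈ (0,1]. Then there exists a constant K (depending only on bounds for f', f'' on [A,B] and on H) such that for all distinct x1, x2, x3 in [A,B] with x2 between x1 and x3, |D(x1,x2,x3;f) − 1 − (x1−x3)·f''(x2)/(2 f'(x2))| ≤ K·|x1−x3|·Δ^α, where Δ = max{x1,x2,x3} − min{x1,x2,x3} and D(x1,x2,x3;f) = ((f(x1)-f(x2))/(x1-x2)) / ((f(x2)-f(x3))/(x2-x3)). -/

import Mathlib

lemma taylor_aux (A B : ℝ) (f f' f'' : ℝ → ℝ) (α H : ℝ) (hα0 : 0 < α) (hH : 0 ≤ H)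
    (hd1 : ∀ x ∈ Set.Icc A B, HasDerivAt f (f' x) x)
    (hd2 : ∀ x ∈ Set.Icc A B, HasDerivAt f' (f'' x) x)
    (hHolder : ∀ x ∈ Set.Icc A B, ∀ y ∈ Set.Icc A B, |f'' x - f'' y| ≤ H * |x - y| ^ α)
    (x y : ℝ) (hx : x ∈ Set.Icc A B) (hy : y ∈ Set.Icc A B) :
    |f y - f x - f' x * (y - x) - f'' x * (y - x) ^ 2 / 2| ≤ H * |y - x| ^ α * (y - x) ^ 2 := by
  set s := Set.uIcc x y with hs
  have hsub : s ⊆ Set.Icc A B := Set.uIcc_subset_Icc hx hy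
  have hconv : Convex ℝ s := convex_uIcc x y
  have hxs : x ∈ s := Set.left_mem_uIcc
  have hys : y ∈ s := Set.right_mem_uIcc
  have key : ∀ t ∈ s, |t - x| ≤ |y - x| := by
    intro t ht
    rw [hs, Set.mem_uIcc] at ht
    rw [abs_le]
    rcases abs_cases (y - x) with ⟨h1, h2⟩ | ⟨h1, h2⟩ <;>
      rcases ht with ⟨h3, h4⟩ | ⟨h3, h4⟩ <;> constructor <;> linarith
  have step1 : ∀ t ∈ s, |f' t - f' x - f'' x * (t - x)| ≤ (H * |y - x| ^ α) * |t - x| := by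
    intro t ht
    have hg : ∀ u ∈ s, HasDerivWithinAt (fun u => f' u - f'' x * u) (f'' u - f'' x) s u := by
      intro u hu
      exact (((hd2 u (hsub hu)).sub ((hasDerivAt_id u).const_mul (f'' x))).congr_deriv (by ring)).hasDerivWithinAt
    have hbd : ∀ u ∈ s, ‖f'' u - f'' x‖ ≤ H * |y - x| ^ α := by
      intro u hu
      calc ‖f'' u - f'' x‖ ≤ H * |u - x| ^ α := hHolder u (hsub hu) x hx
        _ ≤ H * |y - x| ^ α := by
            apply mul_le_mul_of_nonneg_left _ hH
            exact Real.rpow_le_rpow (abs_nonneg _) (key u hu) hα0.le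
    have := hconv.norm_image_sub_le_of_norm_hasDerivWithin_le hg hbd hxs ht
    calc |f' t - f' x - f'' x * (t - x)|
        = ‖(f' t - f'' x * t) - (f' x - f'' x * x)‖ := by rw [Real.norm_eq_abs]; ring_nf
      _ ≤ (H * |y - x| ^ α) * ‖t - x‖ := this
      _ = (H * |y - x| ^ α) * |t - x| := by rw [Real.norm_eq_abs]
  have hG : ∀ u ∈ s, HasDerivWithinAt
      (fun u => f u - f' x * u - f'' x * (u - x) ^ 2 / 2)
      (f' u - f' x - f'' x * (u - x)) s u := by
    intro u hu
    have h1 : HasDerivAt (fun u => f u - f' x * u - f'' x * (u - x) ^ 2 / 2)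
        (f' u - f' x - f'' x * (2 * (u - x) ^ 1 * 1) / 2) u := by
      have hb : HasDerivAt (fun u : ℝ => (u - x) ^ 2) (2 * (u - x) ^ 1 * 1) u :=
        ((hasDerivAt_id u).sub_const x).pow 2
      have := ((hd1 u (hsub hu)).sub ((hasDerivAt_id u).const_mul (f' x))).sub
        ((hb.const_mul (f'' x)).div_const 2)
      exact this.congr_deriv (by ring)
    have h2 : f' u - f' x - f'' x * (2 * (u - x) ^ 1 * 1) / 2
        = f' u - f' x - f'' x * (u - x) := by ring
    rw [h2] at h1
    exact h1.hasDerivWithinAt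
  have hbd2 : ∀ u ∈ s, ‖f' u - f' x - f'' x * (u - x)‖ ≤ (H * |y - x| ^ α) * |y - x| := by
    intro u hu
    rw [Real.norm_eq_abs]
    calc |f' u - f' x - f'' x * (u - x)| ≤ (H * |y - x| ^ α) * |u - x| := step1 u hu
      _ ≤ (H * |y - x| ^ α) * |y - x| := by
          apply mul_le_mul_of_nonneg_left (key u hu)
          positivity
  have := hconv.norm_image_sub_le_of_norm_hasDerivWithin_le hG hbd2 hxs hys
  calc |f y - f x - f' x * (y - x) - f'' x * (y - x) ^ 2 / 2|
      = ‖(f y - f' x * y - f'' x * (y - x) ^ 2 / 2) - (f x - f' x * x - f'' x * (x - x) ^ 2 / 2)‖ := by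
        rw [Real.norm_eq_abs]; ring_nf
    _ ≤ (H * |y - x| ^ α) * |y - x| * ‖y - x‖ := this
    _ = H * |y - x| ^ α * (y - x) ^ 2 := by
        rw [Real.norm_eq_abs, mul_assoc, abs_mul_abs_self]; ring

lemma slope_ge (A B m : ℝ) (f f' : ℝ → ℝ)
    (hd1 : ∀ x ∈ Set.Icc A B, HasDerivAt f (f' x) x)
    (hm : ∀ x ∈ Set.Icc A B, m ≤ f' x)
    (u v : ℝ) (hu : u ∈ Set.Icc A B) (hv : v ∈ Set.Icc A B) (huv : v < u) :
    m ≤ (f u - f v) / (u - v) := by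
  have hsub : Set.Icc v u ⊆ Set.Icc A B := Set.Icc_subset_Icc hv.1 hu.2
  have hc : ContinuousOn f (Set.Icc v u) := fun t ht =>
    (hd1 t (hsub ht)).continuousAt.continuousWithinAt
  obtain ⟨c, hc1, hc2⟩ := exists_hasDerivAt_eq_slope f f' huv hc
    (fun t ht => hd1 t (hsub (Set.mem_Icc_of_Ioo ht)))
  rw [← hc2]
  exact hm c (hsub (Set.mem_Icc_of_Ioo hc1))

lemma slope_taylor (A B : ℝ) (f f' f'' : ℝ → ℝ) (α H : ℝ) (hα0 : 0 < α) (hH : 0 ≤ H)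
    (hd1 : ∀ x ∈ Set.Icc A B, HasDerivAt f (f' x) x)
    (hd2 : ∀ x ∈ Set.Icc A B, HasDerivAt f' (f'' x) x)
    (hHolder : ∀ x ∈ Set.Icc A B, ∀ y ∈ Set.Icc A B, |f'' x - f'' y| ≤ H * |x - y| ^ α)
    (x y : ℝ) (hx : x ∈ Set.Icc A B) (hy : y ∈ Set.Icc A B) (hxy : y ≠ x)
    (T : ℝ) (hT : |y - x| ≤ T) :
    |(f y - f x) / (y - x) - f' x - f'' x * (y - x) / 2| ≤ H * T ^ α * |y - x| := by
  have hyx : y - x ≠ 0 := sub_ne_zero.2 hxy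
  have h := taylor_aux A B f f' f'' α H hα0 hH hd1 hd2 hHolder x y hx hy
  have heq : (f y - f x) / (y - x) - f' x - f'' x * (y - x) / 2
      = (f y - f x - f' x * (y - x) - f'' x * (y - x) ^ 2 / 2) / (y - x) := by
    field_simp
  rw [heq, abs_div, div_le_iff₀ (abs_pos.2 hyx)]
  calc |f y - f x - f' x * (y - x) - f'' x * (y - x) ^ 2 / 2|
      ≤ H * |y - x| ^ α * (y - x) ^ 2 := h
    _ ≤ H * T ^ α * (y - x) ^ 2 :=
        mul_le_mul_of_nonneg_right
          (mul_le_mul_of_nonneg_left (Real.rpow_le_rpow (abs_nonneg _) hT hα0.le) hH)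
          (sq_nonneg _)
    _ = H * T ^ α * |y - x| * |y - x| := by
        rw [pow_two, ← abs_mul_abs_self (y - x)]; ring

/-- Ratio distortion of three points with respect to `f`. -/
noncomputable def ratioD (f : ℝ → ℝ) (x1 x2 x3 : ℝ) : ℝ :=
  ((f x1 - f x2) / (x1 - x2)) / ((f x2 - f x3) / (x2 - x3))

set_option maxHeartbeats 1600000 in
theorem ratioD_middle_estimate
    (A B : ℝ) (hAB : A < B) (f f' f'' : ℝ → ℝ) (α H : ℝ) (hα : α ∈ Set.Ioc (0:ℝ) 1)
    (hH : 0 ≤ H)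
    (hd1 : ∀ x ∈ Set.Icc A B, HasDerivAt f (f' x) x)
    (hd2 : ∀ x ∈ Set.Icc A B, HasDerivAt f' (f'' x) x)
    (hcont : ContinuousOn f'' (Set.Icc A B))
    (hpos : ∀ x ∈ Set.Icc A B, 0 < f' x)
    (hHolder : ∀ x ∈ Set.Icc A B, ∀ y ∈ Set.Icc A B, |f'' x - f'' y| ≤ H * |x - y| ^ α) :
    ∃ K > 0, ∀ x1 ∈ Set.Icc A B, ∀ x2 ∈ Set.Icc A B, ∀ x3 ∈ Set.Icc A B,
      x1 ≠ x2 → x2 ≠ x3 → x1 ≠ x3 →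
      (min x1 x3 < x2 ∧ x2 < max x1 x3) →
      |ratioD f x1 x2 x3 - 1 - (x1 - x3) * (f'' x2 / (2 * f' x2))| ≤
        K * |x1 - x3| * (max x1 (max x2 x3) - min x1 (min x2 x3)) ^ α := by
  obtain ⟨hα0, hα1⟩ := hα
  have hcf' : ContinuousOn f' (Set.Icc A B) := fun x hx =>
    (hd2 x hx).continuousAt.continuousWithinAt
  obtain ⟨m, hm0, hmle⟩ : ∃ m, 0 < m ∧ ∀ x ∈ Set.Icc A B, m ≤ f' x := by
    obtain ⟨xm, hxm, hmin⟩ := isCompact_Icc.exists_isMinOn (Set.nonempty_Icc.2 hAB.le) hcf'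
    exact ⟨f' xm, hpos xm hxm, fun x hx => hmin hx⟩
  have hC0 : (0:ℝ) < B - A := sub_pos.2 hAB
  have hCα0 : (0:ℝ) ≤ (B - A) ^ α := Real.rpow_nonneg hC0.le _
  have hC1α0 : (0:ℝ) ≤ (B - A) ^ (1 - α) := Real.rpow_nonneg hC0.le _
  obtain ⟨M, hM0, hMbd⟩ : ∃ M, 0 ≤ M ∧ ∀ x ∈ Set.Icc A B, |f'' x| ≤ M := by
    refine ⟨|f'' A| + H * (B - A) ^ α, by positivity, fun x hx => ?_⟩
    have hx1 : |f'' x - f'' A| ≤ H * |x - A| ^ α := hHolder x hx A (Set.left_mem_Icc.2 hAB.le)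
    have hx2 : |x - A| ^ α ≤ (B - A) ^ α := by
      apply Real.rpow_le_rpow (abs_nonneg _) _ hα0.le
      rw [abs_of_nonneg (sub_nonneg.2 hx.1)]
      exact sub_le_sub_right hx.2 A
    have hx3 : H * |x - A| ^ α ≤ H * (B - A) ^ α := mul_le_mul_of_nonneg_left hx2 hH
    calc |f'' x| = |(f'' x - f'' A) + f'' A| := by congr 1; ring
      _ ≤ |f'' x - f'' A| + |f'' A| := abs_add_le _ _
      _ ≤ |f'' A| + H * (B - A) ^ α := by linarith
  obtain ⟨K0, hK0def⟩ : ∃ K0 : ℝ,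
      K0 = ((B - A) ^ (1 - α) * (M * (M / 2 + H * (B - A) ^ α)) / (2 * m) + H) / m := ⟨_, rfl⟩
  have hK00 : 0 ≤ K0 := by
    rw [hK0def]
    have hq1 : 0 ≤ H * (B - A) ^ α := mul_nonneg hH hCα0
    have hq2 : 0 ≤ (B - A) ^ (1 - α) * (M * (M / 2 + H * (B - A) ^ α)) / (2 * m) := by
      apply div_nonneg _ (by linarith)
      apply mul_nonneg hC1α0
      apply mul_nonneg hM0
      linarith
    exact div_nonneg (by linarith) hm0.le
  refine ⟨K0 + 1, by linarith, ?_⟩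
  intro x1 h1 x2 h2 x3 h3 h12 h23 h13 hbet
  have hs0 : x1 - x3 ≠ 0 := sub_ne_zero.2 h13
  obtain ⟨t, ht_eq⟩ : ∃ t : ℝ, t = |x1 - x3| := ⟨_, rfl⟩
  have ht0 : 0 < t := ht_eq ▸ abs_pos.2 hs0
  have habs : |x1 - x2| + |x2 - x3| = t ∧
      max x1 (max x2 x3) - min x1 (min x2 x3) = t := by
    rcases lt_or_gt_of_ne h13 with h | h
    · have hx12 : x1 < x2 := by have hb1 := hbet.1; rwa [min_eq_left h.le] at hb1
      have hx23 : x2 < x3 := by have hb2 := hbet.2; rwa [max_eq_right h.le] at hb2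
      have htval : t = x3 - x1 := by
        rw [ht_eq, abs_of_neg (by linarith : x1 - x3 < 0)]; ring
      constructor
      · rw [abs_of_neg (by linarith : x1 - x2 < 0),
          abs_of_neg (by linarith : x2 - x3 < 0), htval]; ring
      · rw [max_eq_right hx23.le, max_eq_right (show x1 ≤ x3 by linarith),
          min_eq_left hx23.le, min_eq_left hx12.le, htval]
    · have hx32 : x3 < x2 := by have hb1 := hbet.1; rwa [min_eq_right h.le] at hb1
      have hx21 : x2 < x1 := by have hb2 := hbet.2; rwa [max_eq_left h.le] at hb2
      have htval : t = x1 - x3 := by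
        rw [ht_eq, abs_of_pos (by linarith : (0:ℝ) < x1 - x3)]
      constructor
      · rw [abs_of_pos (by linarith : (0:ℝ) < x1 - x2),
          abs_of_pos (by linarith : (0:ℝ) < x2 - x3), htval]; ring
      · rw [max_eq_left hx32.le, max_eq_left hx21.le,
          min_eq_right hx32.le, min_eq_right h.le, htval]
  have ht_le : t ≤ B - A := by
    rw [ht_eq, abs_le]
    constructor
    · linarith [h1.1, h3.2]
    · linarith [h1.2, h3.1]
  have ha_le : |x1 - x2| ≤ t := by
    have := abs_nonneg (x2 - x3); linarith [habs.1]
  have hb_le : |x2 - x3| ≤ t := by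
    have := abs_nonneg (x1 - x2); linarith [habs.1]
  have hb_le' : |x3 - x2| ≤ t := by rw [abs_sub_comm]; exact hb_le
  have hf2 : 0 < f' x2 := hpos x2 h2
  have hf2m : m ≤ f' x2 := hmle x2 h2
  have hr1 := slope_taylor A B f f' f'' α H hα0 hH hd1 hd2 hHolder x2 x1 h2 h1 h12 t ha_le
  have hr2 := slope_taylor A B f f' f'' α H hα0 hH hd1 hd2 hHolder x2 x3 h2 h3
    (Ne.symm h23) t hb_le'
  have hS2m : m ≤ (f x2 - f x3) / (x2 - x3) := by
    rcases lt_or_gt_of_ne h23 with h | h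
    · have e : (f x2 - f x3) / (x2 - x3) = (f x3 - f x2) / (x3 - x2) := by
        rw [← neg_sub (f x3) (f x2), ← neg_sub x3 x2, neg_div_neg_eq]
      rw [e]; exact slope_ge A B m f f' hd1 hmle x3 x2 h3 h2 h
    · exact slope_ge A B m f f' hd1 hmle x2 x3 h2 h3 h
  obtain ⟨S1, hS1_eq⟩ : ∃ S : ℝ, S = (f x1 - f x2) / (x1 - x2) := ⟨_, rfl⟩
  obtain ⟨S2, hS2_eq⟩ : ∃ S : ℝ, S = (f x2 - f x3) / (x2 - x3) := ⟨_, rfl⟩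
  rw [← hS1_eq] at hr1
  rw [← hS2_eq] at hS2m
  have hS2alt : (f x3 - f x2) / (x3 - x2) = S2 := by
    rw [hS2_eq, ← neg_sub (f x3) (f x2), ← neg_sub x3 x2, neg_div_neg_eq]
  rw [hS2alt] at hr2
  have hS2pos : 0 < S2 := lt_of_lt_of_le hm0 hS2m
  obtain ⟨P, hP_eq⟩ : ∃ P : ℝ, P = t ^ α := ⟨_, rfl⟩
  rw [← hP_eq] at hr1 hr2
  have hP0 : 0 < P := hP_eq ▸ Real.rpow_pos_of_pos ht0 α
  obtain ⟨r1, hr1_eq⟩ : ∃ r : ℝ, r = S1 - f' x2 - f'' x2 * (x1 - x2) / 2 := ⟨_, rfl⟩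
  obtain ⟨r2, hr2_eq⟩ : ∃ r : ℝ, r = S2 - f' x2 - f'' x2 * (x3 - x2) / 2 := ⟨_, rfl⟩
  rw [← hr1_eq] at hr1
  rw [← hr2_eq] at hr2
  unfold ratioD
  rw [habs.2, ← hS1_eq, ← hS2_eq, ← ht_eq, ← hP_eq]
  have hkey : S1 / S2 - 1 - (x1 - x3) * (f'' x2 / (2 * f' x2))
      = ((x1 - x3) * f'' x2 * (f' x2 - S2) / (2 * f' x2) + (r1 - r2)) / S2 := by
    rw [hr1_eq, hr2_eq]
    field_simp
    ring
  have hfS : |f' x2 - S2| ≤ M * t / 2 + H * P * t := by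
    have e : f' x2 - S2 = -(r2 + f'' x2 * (x3 - x2) / 2) := by rw [hr2_eq]; ring
    rw [e, abs_neg]
    have habs2 : |f'' x2 * (x3 - x2) / 2| = |f'' x2| * |x3 - x2| / 2 := by
      rw [abs_div, abs_mul]; norm_num
    calc |r2 + f'' x2 * (x3 - x2) / 2| ≤ |r2| + |f'' x2 * (x3 - x2) / 2| := abs_add_le _ _
      _ ≤ H * P * |x3 - x2| + |f'' x2| * |x3 - x2| / 2 := by rw [habs2]; linarith [hr2]
      _ ≤ M * t / 2 + H * P * t := by
          have hq1 : H * P * |x3 - x2| ≤ H * P * t :=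
            mul_le_mul_of_nonneg_left hb_le' (mul_nonneg hH hP0.le)
          have hq2 : |f'' x2| * |x3 - x2| ≤ M * t :=
            mul_le_mul (hMbd x2 h2) hb_le' (abs_nonneg _) hM0
          linarith
  have hnum : |(x1 - x3) * f'' x2 * (f' x2 - S2) / (2 * f' x2) + (r1 - r2)|
      ≤ t * M * (M * t / 2 + H * P * t) / (2 * m) + H * P * t := by
    have e1 : |(x1 - x3) * f'' x2 * (f' x2 - S2) / (2 * f' x2)|
        = t * |f'' x2| * |f' x2 - S2| / (2 * f' x2) := by
      rw [abs_div, abs_mul, abs_mul, abs_of_pos (by linarith : (0:ℝ) < 2 * f' x2), ht_eq]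
    have e2 : |r1 - r2| ≤ H * P * t := by
      calc |r1 - r2| = |r1 + -r2| := by rw [sub_eq_add_neg]
        _ ≤ |r1| + |-r2| := abs_add_le _ _
        _ = |r1| + |r2| := by rw [abs_neg]
        _ ≤ H * P * |x1 - x2| + H * P * |x3 - x2| := add_le_add hr1 hr2
        _ = H * P * (|x1 - x2| + |x2 - x3|) := by rw [abs_sub_comm x3 x2]; ring
        _ = H * P * t := by rw [habs.1]
    have hin : 0 ≤ M * t / 2 + H * P * t := by
      have q1 := mul_nonneg (mul_nonneg hH hP0.le) ht0.le
      have q2 := mul_nonneg hM0 ht0.le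
      linarith
    have e3 : t * |f'' x2| * |f' x2 - S2| / (2 * f' x2)
        ≤ t * M * (M * t / 2 + H * P * t) / (2 * m) := by
      apply div_le_div₀ (mul_nonneg (mul_nonneg ht0.le hM0) hin) _ (by linarith) (by linarith)
      apply mul_le_mul _ hfS (abs_nonneg _) (mul_nonneg ht0.le hM0)
      exact mul_le_mul_of_nonneg_left (hMbd x2 h2) ht0.le
    calc |(x1 - x3) * f'' x2 * (f' x2 - S2) / (2 * f' x2) + (r1 - r2)|
        ≤ |(x1 - x3) * f'' x2 * (f' x2 - S2) / (2 * f' x2)| + |r1 - r2| := abs_add_le _ _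
      _ ≤ t * M * (M * t / 2 + H * P * t) / (2 * m) + H * P * t := by
          rw [e1]; linarith
  have hsplit : P * t ^ (1 - α) = t := by
    have hone : α + (1 - α) = 1 := by ring
    rw [hP_eq, ← Real.rpow_add ht0, hone, Real.rpow_one]
  have htα : P ≤ (B - A) ^ α := by
    rw [hP_eq]; exact Real.rpow_le_rpow ht0.le ht_le hα0.le
  have ht1α : t ^ (1 - α) ≤ (B - A) ^ (1 - α) :=
    Real.rpow_le_rpow ht0.le ht_le (by linarith)
  rw [hkey, abs_div, abs_of_pos hS2pos]
  have key2 : t * M * (M * t / 2 + H * P * t)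
      ≤ t * P * ((B - A) ^ (1 - α) * (M * (M / 2 + H * (B - A) ^ α))) := by
    have e : t * M * (M * t / 2 + H * P * t)
        = t * P * (t ^ (1 - α) * (M * (M / 2 + H * P))) := by
      linear_combination (-(t * (M * (M / 2 + H * P)))) * hsplit
    rw [e]
    apply mul_le_mul_of_nonneg_left _ (mul_nonneg ht0.le hP0.le)
    have hinner : M * (M / 2 + H * P) ≤ M * (M / 2 + H * (B - A) ^ α) := by
      apply mul_le_mul_of_nonneg_left _ hM0
      have := mul_le_mul_of_nonneg_left htα hH
      linarith
    have hinner0 : 0 ≤ M * (M / 2 + H * P) := by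
      apply mul_nonneg hM0
      have := mul_nonneg hH hP0.le
      linarith
    exact mul_le_mul ht1α hinner hinner0 hC1α0
  have e4 : (t * P * ((B - A) ^ (1 - α) * (M * (M / 2 + H * (B - A) ^ α))) / (2 * m)
        + H * P * t) / m = K0 * t * P := by
    rw [hK0def]; field_simp
  calc |(x1 - x3) * f'' x2 * (f' x2 - S2) / (2 * f' x2) + (r1 - r2)| / S2
      ≤ |(x1 - x3) * f'' x2 * (f' x2 - S2) / (2 * f' x2) + (r1 - r2)| / m :=
        div_le_div_of_nonneg_left (abs_nonneg _) hm0 hS2m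
    _ ≤ (t * M * (M * t / 2 + H * P * t) / (2 * m) + H * P * t) / m :=
        (div_le_div_iff_of_pos_right hm0).2 hnum
    _ ≤ (t * P * ((B - A) ^ (1 - α) * (M * (M / 2 + H * (B - A) ^ α))) / (2 * m)
          + H * P * t) / m := by
        apply (div_le_div_iff_of_pos_right hm0).2
        have := (div_le_div_iff_of_pos_right (by linarith : (0:ℝ) < 2 * m)).2 key2
        linarith
    _ = K0 * t * P := e4
    _ ≤ (K0 + 1) * t * P := by nlinarith [mul_nonneg ht0.le hP0.le]
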